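/- arXiv:1401.8058 — 3 statements merged into one kernel-verified Lean document; each statement's English description precedes it below -/
import Mathlib

section
/- Let A, C₀ be m×m real matrices with A C₀ - C₀ A ≠ 0, and let C(x) = e^{xA} C₀ e^{-xA}. If real constants k₁, k₂, k₃ satisfy (k₁x² + 2k₂x + k₃)(A C(x) - C(x) A) + 4(k₁x + k₂) C(x) = 0 for all real x, then k₁ = k₂ = k₃ = 0. -/
open Matrix NormedSpace

/-- If `A C₀ - C₀ A ≠ 0`, `C x = exp(xA) C₀ exp(-xA)`, and
`(k₁x² + 2k₂x + k₃)(A C - C A) + 4(k₁x + k₂) C = 0` for all `x`, then `k₁ = k₂ = k₃ = 0`. -/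
theorem stmt_2 {m : ℕ} (A C₀ : Matrix (Fin m) (Fin m) ℝ)
    (hAC : A * C₀ - C₀ * A ≠ 0)
    (C : ℝ → Matrix (Fin m) (Fin m) ℝ)
    (hC : ∀ x : ℝ, C x = exp (x • A) * C₀ * exp (-(x • A)))
    (k₁ k₂ k₃ : ℝ)
    (h : ∀ x : ℝ,
      (k₁ * x ^ 2 + 2 * k₂ * x + k₃) • (A * C x - C x * A)
        + (4 * (k₁ * x + k₂)) • C x = 0) :
    k₁ = 0 ∧ k₂ = 0 ∧ k₃ = 0 := by
  set B := A * C₀ - C₀ * A with hB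
  -- Key: the identity conjugates to a polynomial identity with constant matrices
  have key : ∀ x : ℝ, (k₁ * x ^ 2 + 2 * k₂ * x + k₃) • B
      + (4 * (k₁ * x + k₂)) • C₀ = 0 := by
    intro x
    have hcomm : Commute (x • A) (-(x • A)) := (Commute.refl _).neg_right
    have hEF : exp (x • A) * exp (-(x • A)) = 1 := by
      rw [← Matrix.exp_add_of_commute _ _ hcomm, add_neg_cancel, exp_zero]
    have hFE : exp (-(x • A)) * exp (x • A) = 1 := by
      rw [← Matrix.exp_add_of_commute _ _ hcomm.symm, neg_add_cancel, exp_zero]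
    have hAE : A * exp (x • A) = exp (x • A) * A :=
      ((Commute.refl A).smul_right x).exp_right
    have hAF : exp (-(x • A)) * A = A * exp (-(x • A)) :=
      (((Commute.refl A).smul_right x).neg_right.exp_right).symm
    have hx := h x
    rw [hC x] at hx
    set E := exp (x • A)
    set F := exp (-(x • A))
    have hconj : A * (E * C₀ * F) - (E * C₀ * F) * A = E * B * F := by
      rw [hB]
      have h1 : A * (E * C₀ * F) = E * (A * C₀) * F := by
        rw [← mul_assoc, ← mul_assoc, hAE, mul_assoc E A C₀]
      have h2 : (E * C₀ * F) * A = E * (C₀ * A) * F := by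
        rw [mul_assoc (E * C₀), hAF, ← mul_assoc, mul_assoc E C₀ A]
      rw [h1, h2, mul_sub, sub_mul]
    rw [hconj] at hx
    have hx2 : E * ((k₁ * x ^ 2 + 2 * k₂ * x + k₃) • B
        + (4 * (k₁ * x + k₂)) • C₀) * F = 0 := by
      rw [mul_add, add_mul, Matrix.mul_smul, Matrix.mul_smul, Matrix.smul_mul,
        Matrix.smul_mul]
      exact hx
    have : F * (E * ((k₁ * x ^ 2 + 2 * k₂ * x + k₃) • B
        + (4 * (k₁ * x + k₂)) • C₀) * F) * E = 0 := by rw [hx2]; simp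
    rw [← mul_assoc, ← mul_assoc, hFE, one_mul, mul_assoc, hFE, mul_one] at this
    exact this
  -- Pick a nonzero entry of B
  obtain ⟨i, j, hb⟩ : ∃ i j, B i j ≠ 0 := by
    by_contra hcon
    push_neg at hcon
    exact hAC (by ext i j; exact hcon i j)
  set b := B i j
  set c := C₀ i j
  have g : ∀ x : ℝ, (k₁ * x ^ 2 + 2 * k₂ * x + k₃) * b + (4 * (k₁ * x + k₂)) * c = 0 := by
    intro x
    have := congrFun (congrFun (key x) i) j
    simpa [Matrix.add_apply, Matrix.smul_apply, smul_eq_mul] using this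
  have g0 := g 0
  have g1 := g 1
  have gm := g (-1)
  have hk1 : k₁ = 0 := by
    have : k₁ * b = 0 := by ring_nf at g0 g1 gm ⊢; linarith
    rcases mul_eq_zero.mp this with h' | h'
    · exact h'
    · exact absurd h' hb
  subst hk1
  have hk2 : k₂ = 0 := by
    have : k₂ * b = 0 := by ring_nf at g0 g1 gm ⊢; linarith
    rcases mul_eq_zero.mp this with h' | h'
    · exact h'
    · exact absurd h' hb
  subst hk2
  have hk3 : k₃ = 0 := by
    have : k₃ * b = 0 := by ring_nf at g0 ⊢; linarith
    rcases mul_eq_zero.mp this with h' | h'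
    · exact h'
    · exact absurd h' hb
  exact ⟨rfl, rfl, hk3⟩
end

section
/- Let C₀, A₂, A₃ be m×m real matrices satisfying A₂ C₀ - C₀(A₂ + 4E) = 0 and A₂ A₃ - A₃(A₂ + 2E) = 0, and let C(x) = e^{xA₃} C₀ e^{-xA₃}. Then C satisfies -2x(C A₃ - A₃ C) + C A₂ - A₂ C + 4C = 0 for all real x. -/
open Matrix NormedSpace

attribute [local instance] Matrix.linftyOpNormedRing Matrix.linftyOpNormedAlgebra

section aux
variable {m : ℕ} (A₂ A₃ : Matrix (Fin m) (Fin m) ℝ)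

lemma key_aux (h2 : A₂ * A₃ - A₃ * A₂ = 2 • A₃) :
    ∀ x : ℝ, A₂ * exp (x • A₃) = exp (x • A₃) * A₂ + (2*x) • (A₃ * exp (x • A₃)) := by
  set g : ℝ → Matrix (Fin m) (Fin m) ℝ :=
    fun x => exp (x • (-A₃)) * (A₂ * exp (x • A₃)) - (2*x) • A₃ with hg
  have hcommE : ∀ x : ℝ, Commute A₃ (exp (x • A₃)) :=
    fun x => ((Commute.refl A₃).smul_right x).exp_right
  have hcommF : ∀ x : ℝ, Commute A₃ (exp (x • (-A₃))) :=
    fun x => (((Commute.refl A₃).neg_right).smul_right x).exp_right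
  have hinv : ∀ x : ℝ, exp (x • (-A₃)) * exp (x • A₃) = 1 := by
    intro x
    erw [← exp_add_of_commute ((((Commute.refl A₃).neg_left).smul_left x).smul_right x)]
    simp
  have hinv' : ∀ x : ℝ, exp (x • A₃) * exp (x • (-A₃)) = 1 := by
    intro x
    erw [← exp_add_of_commute ((((Commute.refl A₃).neg_right).smul_left x).smul_right x)]
    simp
  have hderiv : ∀ x : ℝ, HasDerivAt g 0 x := by
    intro x
    have h1 := (hasDerivAt_exp_smul_const (𝕂 := ℝ) (-A₃) x)
    have h3 : HasDerivAt (fun u : ℝ => A₂ * exp (u • A₃)) (A₂ * (A₃ * exp (x • A₃))) x :=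
      (hasDerivAt_exp_smul_const' (𝕂 := ℝ) A₃ x).const_mul A₂
    have h5 : HasDerivAt (fun u : ℝ => (2*u) • A₃) ((2:ℝ) • A₃) x := by
      have h : HasDerivAt (fun u : ℝ => 2*u) 2 x := by
        simpa using (hasDerivAt_id x).const_mul (2:ℝ)
      exact h.smul_const A₃
    have h6 := ((h1.mul h3).sub h5)
    refine h6.congr_deriv ?_
    have e1 : exp (x • (-A₃)) * -A₃ * (A₂ * exp (x • A₃))
        + exp (x • (-A₃)) * (A₂ * (A₃ * exp (x • A₃)))
        = exp (x • (-A₃)) * ((A₂ * A₃ - A₃ * A₂) * exp (x • A₃)) := by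
      noncomm_ring
    erw [e1, h2]
    have e2 : exp (x • (-A₃)) * (2 • A₃ * exp (x • A₃)) = 2 • A₃ := by
      rw [smul_mul_assoc, mul_smul_comm, (hcommE x).eq, ← mul_assoc, hinv x, one_mul]
    erw [e2]
    simp [two_smul]
  have hconst : ∀ x : ℝ, g x = g 0 := fun x =>
    is_const_of_deriv_eq_zero (fun y => (hderiv y).differentiableAt)
      (fun y => (hderiv y).deriv) x 0
  intro x
  have hx := hconst x
  simp only [hg, zero_smul, exp_zero, one_mul, mul_one, mul_zero, zero_mul] at hx
  -- hx : F * (A₂ * E) - (2x)•A₃ = A₂ (with the 0-case simplified)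
  have hx' : exp (x • (-A₃)) * (A₂ * exp (x • A₃)) = A₂ + (2*x) • A₃ := by
    rw [sub_eq_iff_eq_add] at hx
    rw [hx]; abel
  calc A₂ * exp (x • A₃)
      = exp (x • A₃) * (exp (x • (-A₃)) * (A₂ * exp (x • A₃))) := by
        rw [← mul_assoc, hinv' x, one_mul]
    _ = exp (x • A₃) * A₂ + (2*x) • (A₃ * exp (x • A₃)) := by
        rw [hx', mul_add, mul_smul_comm, ← (hcommE x).eq]

end aux

/-- If `A₂C₀ - C₀(A₂+4E) = 0` and `A₂A₃ - A₃(A₂+2E) = 0` then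
`C x = exp(xA₃) C₀ exp(-xA₃)` satisfies `-2x(C A₃ - A₃ C) + C A₂ - A₂ C + 4C = 0`. -/
theorem stmt_4 {m : ℕ} (C₀ A₂ A₃ : Matrix (Fin m) (Fin m) ℝ)
    (h1 : A₂ * C₀ - C₀ * (A₂ + 4 • (1 : Matrix (Fin m) (Fin m) ℝ)) = 0)
    (h2 : A₂ * A₃ - A₃ * (A₂ + 2 • (1 : Matrix (Fin m) (Fin m) ℝ)) = 0)
    (C : ℝ → Matrix (Fin m) (Fin m) ℝ)
    (hC : ∀ x : ℝ, C x = NormedSpace.exp (x • A₃) * C₀ * NormedSpace.exp (-(x • A₃))) :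
    ∀ x : ℝ, (-2 * x) • (C x * A₃ - A₃ * C x) + C x * A₂ - A₂ * C x + 4 • C x = 0 := by
  have h2' : A₂ * A₃ - A₃ * A₂ = 2 • A₃ := by
    rw [sub_eq_zero] at h2; rw [h2]; noncomm_ring
  have h1' : A₂ * C₀ = C₀ * A₂ + 4 • C₀ := by
    rw [sub_eq_zero] at h1; rw [h1]; noncomm_ring
  have key := key_aux A₂ A₃ h2'
  intro x
  have hCx : C x = exp (x • A₃) * C₀ * exp ((-x) • A₃) := by
    rw [hC x, neg_smul]
  set E := exp (x • A₃) with hE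
  set F := exp ((-x) • A₃) with hF
  have commE : A₃ * E = E * A₃ := (((Commute.refl A₃).smul_right x).exp_right).eq
  have commF : A₃ * F = F * A₃ := (((Commute.refl A₃).smul_right (-x)).exp_right).eq
  have k1 : A₂ * E = E * A₂ + (2*x) • (A₃ * E) := key x
  have k2 : A₂ * F = F * A₂ + (2*(-x)) • (A₃ * F) := key (-x)
  have hFA : F * A₂ = A₂ * F + (2*x) • (A₃ * F) := by
    rw [k2]; module
  have hA : A₂ * (E * C₀ * F) =
      E * (C₀ * A₂) * F + 4 • (E * C₀ * F) + (2*x) • (A₃ * (E * C₀ * F)) := by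
    have e : A₂ * (E * C₀ * F) = (A₂ * E) * C₀ * F := by noncomm_ring
    rw [e, k1, add_mul, add_mul, smul_mul_assoc, smul_mul_assoc,
      mul_assoc E A₂ C₀, h1']
    simp only [add_mul, mul_add, smul_mul_assoc, mul_smul_comm, mul_assoc]
  have hB : (E * C₀ * F) * A₂ =
      E * (C₀ * A₂) * F + (2*x) • ((E * C₀ * F) * A₃) := by
    have e : (E * C₀ * F) * A₂ = E * C₀ * (F * A₂) := by noncomm_ring
    rw [e, hFA]
    simp only [mul_add, mul_smul_comm, commF, smul_mul_assoc, mul_assoc]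
  rw [hCx, hA, hB]
  simp only [mul_assoc] at *
  module
end

section
/- Let C₀, A₁, A₂, A₃ be m×m real matrices with A₁A₃ - A₃A₁ = A₂, A₂C₀ - C₀(A₂+4E) = 0, C₀A₁ - A₁C₀ = 0, and A₂A₃ - A₃A₂ = 2A₃. Define C(x) = e^{xA₃} C₀ e^{-xA₃} and S₁(x) = 4x C₀ - x²(C₀A₃ - A₃C₀) + C₀ e^{-xA₃} A₁ e^{xA₃} - e^{-xA₃} A₁ e^{xA₃} C₀. Then S₁(x) = 0 for all real x. -/
open Matrix NormedSpace

attribute [local instance] Matrix.linftyOpNormedRing Matrix.linftyOpNormedAlgebra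
  Matrix.linftyOpNormedAddCommGroup

private lemma conj_hasDerivAt {m : ℕ} (A M : Matrix (Fin m) (Fin m) ℝ) (x : ℝ) :
    HasDerivAt (fun t : ℝ => exp (-(t • A)) * M * exp (t • A))
      (exp (-(x • A)) * (M * A - A * M) * exp (x • A)) x := by
  have h1 : HasDerivAt (fun t : ℝ => exp (-(t • A)))
      (exp (x • (-A)) * (-A)) x := by
    have h0 := hasDerivAt_exp_smul_const (𝕂 := ℝ) (-A) x
    simp only [neg_smul, smul_neg] at h0 ⊢
    exact h0
  have h2 := hasDerivAt_exp_smul_const (𝕂 := ℝ) A x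
  have h := (h1.mul_const M).mul h2
  have hc : exp (x • A) * A = A * exp (x • A) :=
    (((Commute.refl A).smul_right x).exp_right).symm.eq
  refine h.congr_deriv ?_
  simp only [neg_smul, smul_neg] at *
  erw [hc]
  noncomm_ring
  exact add_comm _ _

private lemma exp_cancel {m : ℕ} (A : Matrix (Fin m) (Fin m) ℝ) (x : ℝ) :
    exp (-(x • A)) * exp (x • A) = 1 := by
  rw [← Matrix.exp_add_of_commute (-(x • A)) (x • A) (Commute.neg_left (Commute.refl _)), neg_add_cancel, exp_zero]

private lemma conj_self {m : ℕ} (A : Matrix (Fin m) (Fin m) ℝ) (x : ℝ) :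
    exp (-(x • A)) * A * exp (x • A) = A := by
  have hc : A * exp (x • A) = exp (x • A) * A :=
    (((Commute.refl A).smul_right x).exp_right).eq
  rw [mul_assoc, hc, ← mul_assoc, exp_cancel, one_mul]

/-- Under the stated commutator relations, the function
`S₁(x) = 4x C₀ - x²(C₀A₃ - A₃C₀) + C₀ e^{-xA₃} A₁ e^{xA₃} - e^{-xA₃} A₁ e^{xA₃} C₀`
vanishes identically. -/
theorem stmt_16 {m : ℕ} (C₀ A₁ A₂ A₃ : Matrix (Fin m) (Fin m) ℝ)
    (h1 : A₁ * A₃ - A₃ * A₁ = A₂)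
    (h2 : A₂ * C₀ - C₀ * (A₂ + 4 • (1 : Matrix (Fin m) (Fin m) ℝ)) = 0)
    (h3 : C₀ * A₁ - A₁ * C₀ = 0)
    (h4 : A₂ * A₃ - A₃ * A₂ = 2 • A₃)
    (S₁ : ℝ → Matrix (Fin m) (Fin m) ℝ)
    (hS₁ : ∀ x : ℝ, S₁ x =
      (4 * x) • C₀ - (x ^ 2) • (C₀ * A₃ - A₃ * C₀)
        + C₀ * (exp (-(x • A₃)) * A₁ * exp (x • A₃))
        - exp (-(x • A₃)) * A₁ * exp (x • A₃) * C₀) :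
    ∀ x : ℝ, S₁ x = 0 := by
  have h4' : A₂ * A₃ - A₃ * A₂ = (2 : ℝ) • A₃ := by
    rw [h4, ← Nat.cast_smul_eq_nsmul ℝ]; norm_num
  -- Step 1 : e^{-xA₃} A₂ e^{xA₃} = A₂ + 2x A₃
  have key1 : ∀ x : ℝ, exp (-(x • A₃)) * A₂ * exp (x • A₃) = A₂ + (2 * x) • A₃ := by
    set F : ℝ → Matrix (Fin m) (Fin m) ℝ :=
      fun x => exp (-(x • A₃)) * A₂ * exp (x • A₃) - (2 * x) • A₃ with hF
    have hder : ∀ x : ℝ, HasDerivAt F 0 x := by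
      intro x
      have hlin : HasDerivAt (fun t : ℝ => (2 * t) • A₃) ((2 : ℝ) • A₃) x := by
        have h2t : HasDerivAt (fun t : ℝ => 2 * t) 2 x := by
          simpa using (hasDerivAt_id x).const_mul (2 : ℝ)
        exact h2t.smul_const A₃
      have h := (conj_hasDerivAt A₃ A₂ x).sub hlin
      have hz : exp (-(x • A₃)) * (A₂ * A₃ - A₃ * A₂) * exp (x • A₃) - (2 : ℝ) • A₃ = 0 := by
        rw [h4', mul_smul_comm, smul_mul_assoc, conj_self, sub_self]
      rwa [hz] at h
    intro x
    have hx : F x = F 0 :=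
      is_const_of_deriv_eq_zero (fun y => (hder y).differentiableAt)
        (fun y => (hder y).deriv) x 0
    simp only [hF, zero_smul, neg_zero, exp_zero, one_mul, mul_one, mul_zero, sub_zero] at hx
    rw [sub_eq_iff_eq_add] at hx
    exact hx
  -- Step 2 : e^{-xA₃} A₁ e^{xA₃} = A₁ + x A₂ + x² A₃
  have key2 : ∀ x : ℝ,
      exp (-(x • A₃)) * A₁ * exp (x • A₃) = A₁ + x • A₂ + (x ^ 2) • A₃ := by
    set G : ℝ → Matrix (Fin m) (Fin m) ℝ :=
      fun x => exp (-(x • A₃)) * A₁ * exp (x • A₃) - x • A₂ - (x ^ 2) • A₃ with hG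
    have hder : ∀ x : ℝ, HasDerivAt G 0 x := by
      intro x
      have hl1 : HasDerivAt (fun t : ℝ => t • A₂) ((1 : ℝ) • A₂) x :=
        (hasDerivAt_id x).smul_const A₂
      have hl2 : HasDerivAt (fun t : ℝ => (t ^ 2) • A₃) ((2 * x) • A₃) x := by
        have hp : HasDerivAt (fun t : ℝ => t ^ 2) (2 * x) x := by
          simpa using hasDerivAt_pow 2 x
        exact hp.smul_const A₃
      have h := ((conj_hasDerivAt A₃ A₁ x).sub hl1).sub hl2
      have hz : exp (-(x • A₃)) * (A₁ * A₃ - A₃ * A₁) * exp (x • A₃)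
          - (1 : ℝ) • A₂ - (2 * x) • A₃ = 0 := by
        rw [h1, key1 x, one_smul]; abel
      rwa [hz] at h
    intro x
    have hx : G x = G 0 :=
      is_const_of_deriv_eq_zero (fun y => (hder y).differentiableAt)
        (fun y => (hder y).deriv) x 0
    simp only [hG, zero_smul, neg_zero, exp_zero, one_mul, mul_one, ne_eq,
      OfNat.ofNat_ne_zero, not_false_eq_true, zero_pow, sub_zero] at hx
    rw [sub_sub, sub_eq_iff_eq_add] at hx
    rw [hx]; abel
  -- Final algebra
  have hA1 : C₀ * A₁ = A₁ * C₀ := by rwa [sub_eq_zero] at h3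
  have h2' : A₂ * C₀ = C₀ * A₂ + (4 : ℝ) • C₀ := by
    rw [sub_eq_zero] at h2
    rw [h2, mul_add, mul_smul_comm, mul_one, ← Nat.cast_smul_eq_nsmul ℝ]
    norm_num
  intro x
  rw [hS₁ x, key2 x]
  rw [mul_add, mul_add, add_mul, add_mul, hA1, mul_smul_comm, mul_smul_comm,
    smul_mul_assoc, smul_mul_assoc, h2', smul_add]
  rw [smul_sub]
  module
end
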